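/- Let B_0, B_1, …, B_n (n ≥ 1) be random vectors forming a path in a Bayes linear tree, i.e. Cov_{B_k}(B_0, B_{k+1}) = 0 for every k with 1 ≤ k ≤ n−1, where each subscripted operator uses the Moore–Penrose inverse of the corresponding variance matrix. Then the projection from the root propagates along the path: P_{B_0}(B_n) = P_{B_{n−1}}(B_n)·P_{B_{n−2}}(B_{n−1})·…·P_{B_1}(B_2)·P_{B_0}(B_1). -/

import Mathlib

open MeasureTheory Matrix

variable {Ω : Type*}

/-- The covariance matrix of two random vectors `B` (dimension `m`) and `D` (dimension `n`):
the `(i,j)` entry is `E[Bᵢ·Dⱼ] − E[Bᵢ]·E[Dⱼ]`. -/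
noncomputable def cov [MeasurableSpace Ω] (μ : Measure Ω) {m n : ℕ}
    (B : Fin m → Ω → ℝ) (D : Fin n → Ω → ℝ) : Matrix (Fin m) (Fin n) ℝ :=
  Matrix.of fun i j =>
    (∫ ω, B i ω * D j ω ∂μ) - (∫ ω, B i ω ∂μ) * (∫ ω, D j ω ∂μ)

/-- `W` is a Moore–Penrose inverse of `V`. -/
def IsMoorePenrose {m n : ℕ} (V : Matrix (Fin m) (Fin n) ℝ)
    (W : Matrix (Fin n) (Fin m) ℝ) : Prop :=
  V * W * V = V ∧ W * V * W = W ∧ (V * W)ᵀ = V * W ∧ (W * V)ᵀ = W * V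

/-- The adjusted expectation `E_D(B)` (computed with the matrix `W`, intended to be the
Moore–Penrose inverse of `Var(D)`): the `i`-th component is
`E[Bᵢ] + Σ_j (Cov(B,D)·W)_{ij}·(Dⱼ − E[Dⱼ])`. -/
noncomputable def adjExp [MeasurableSpace Ω] (μ : Measure Ω) {m n : ℕ}
    (B : Fin m → Ω → ℝ) (D : Fin n → Ω → ℝ)
    (W : Matrix (Fin n) (Fin n) ℝ) : Fin m → Ω → ℝ :=
  fun i ω => (∫ ω', B i ω' ∂μ) + ∑ j, (cov μ B D * W) i j * (D j ω - ∫ ω', D j ω' ∂μ)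

/-- The adjusted covariance `Cov_D(B,C) = Cov(B − E_D(B), C − E_D(C))`. -/
noncomputable def adjCov [MeasurableSpace Ω] (μ : Measure Ω) {m p n : ℕ}
    (B : Fin m → Ω → ℝ) (C : Fin p → Ω → ℝ) (D : Fin n → Ω → ℝ)
    (W : Matrix (Fin n) (Fin n) ℝ) : Matrix (Fin m) (Fin p) ℝ :=
  cov μ (fun i ω => B i ω - adjExp μ B D W i ω) (fun j ω => C j ω - adjExp μ C D W j ω)

/-- The composite projection `P_{B_{n−1}}(B_n)·P_{B_{n−2}}(B_{n−1})·…·P_{B_1}(B_2)·P_{B_0}(B_1)`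
along the path `B_0, B_1, …, B_n`, where `P_{B_k}(B_{k+1}) = Cov(B_{k+1},B_k)·W_k`. -/
noncomputable def pathProj [MeasurableSpace Ω] (μ : Measure Ω) {d : ℕ → ℕ}
    (B : (k : ℕ) → Fin (d k) → Ω → ℝ)
    (W : (k : ℕ) → Matrix (Fin (d k)) (Fin (d k)) ℝ) :
    (n : ℕ) → Matrix (Fin (d n)) (Fin (d 0)) ℝ
  | 0 => 1
  | n + 1 => (cov μ (B (n + 1)) (B n) * W n) * pathProj μ B W n

section Helpers

variable [MeasurableSpace Ω] {μ : Measure Ω} [IsProbabilityMeasure μ]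

lemma l2_mul_integrable {f g : Ω → ℝ} (hf : MemLp f 2 μ) (hg : MemLp g 2 μ) :
    Integrable (fun ω => f ω * g ω) μ := by
  rw [← memLp_one_iff_integrable]
  have := hg.smul (φ := f) hf (r := 1) (hpqr := ⟨by
      rw [ENNReal.inv_two_add_inv_two, inv_one]⟩)
  exact this

omit [IsProbabilityMeasure μ] in
lemma cov_comm {m n : ℕ} (X : Fin m → Ω → ℝ) (Z : Fin n → Ω → ℝ) :
    cov μ X Z = (cov μ Z X)ᵀ := by
  ext i j
  simp [cov, mul_comm]

lemma cov_adj_left {m n p : ℕ} (c : Fin m → ℝ) (M : Matrix (Fin m) (Fin n) ℝ)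
    {B : Fin m → Ω → ℝ} {D : Fin n → Ω → ℝ} {Z : Fin p → Ω → ℝ}
    (hB : ∀ i, MemLp (B i) 2 μ) (hD : ∀ i, MemLp (D i) 2 μ)
    (hZ : ∀ i, MemLp (Z i) 2 μ) :
    cov μ (fun i ω => c i + (B i ω - ∑ k, M i k * D k ω)) Z
      = cov μ B Z - M * cov μ D Z := by
  ext i j
  have hBi : Integrable (B i) μ := (hB i).integrable (by norm_num)
  have hZj : Integrable (Z j) μ := (hZ j).integrable (by norm_num)
  have hDk : ∀ k, Integrable (D k) μ := fun k => (hD k).integrable (by norm_num)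
  have hBZ : Integrable (fun ω => B i ω * Z j ω) μ := l2_mul_integrable (hB i) (hZ j)
  have hDZ : ∀ k, Integrable (fun ω => D k ω * Z j ω) μ :=
    fun k => l2_mul_integrable (hD k) (hZ j)
  have h1 : (∫ ω, (c i + (B i ω - ∑ k, M i k * D k ω)) * Z j ω ∂μ)
      = c i * (∫ ω, Z j ω ∂μ) + ((∫ ω, B i ω * Z j ω ∂μ)
          - ∑ k, M i k * ∫ ω, D k ω * Z j ω ∂μ) := by
    have e : (fun ω => (c i + (B i ω - ∑ k, M i k * D k ω)) * Z j ω)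
        = fun ω => c i * Z j ω + (B i ω * Z j ω - ∑ k, M i k * (D k ω * Z j ω)) := by
      funext ω
      rw [add_mul, sub_mul, Finset.sum_mul]
      simp [mul_assoc]
    have i1 : Integrable (fun ω => c i * Z j ω) μ := hZj.const_mul _
    have i2 : Integrable (fun ω => ∑ k, M i k * (D k ω * Z j ω)) μ :=
      integrable_finset_sum _ fun k _ => (hDZ k).const_mul _
    have i3 : Integrable (fun ω => B i ω * Z j ω - ∑ k, M i k * (D k ω * Z j ω)) μ :=
      hBZ.sub i2
    rw [e, integral_add i1 i3, integral_sub hBZ i2,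
      integral_finset_sum _ (fun k _ => (hDZ k).const_mul _), integral_const_mul]
    simp [integral_const_mul]
  have h2 : (∫ ω, (c i + (B i ω - ∑ k, M i k * D k ω)) ∂μ)
      = c i + ((∫ ω, B i ω ∂μ) - ∑ k, M i k * ∫ ω, D k ω ∂μ) := by
    have i2 : Integrable (fun ω => ∑ k, M i k * D k ω) μ :=
      integrable_finset_sum _ fun k _ => (hDk k).const_mul _
    have i3 : Integrable (fun ω => B i ω - ∑ k, M i k * D k ω) μ := hBi.sub i2
    rw [integral_add (integrable_const _) i3, integral_sub hBi i2,
      integral_finset_sum _ (fun k _ => (hDk k).const_mul _)]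
    simp [integral_const_mul]
  simp only [cov, Matrix.sub_apply, Matrix.mul_apply, Matrix.of_apply, h1, h2]
  simp only [mul_sub, sub_mul, add_mul, mul_add, Finset.sum_sub_distrib,
    Finset.mul_sum, Finset.sum_mul, mul_assoc, mul_comm, mul_left_comm]
  ring


lemma cov_adj_right {m n p : ℕ} (c : Fin p → ℝ) (N : Matrix (Fin p) (Fin n) ℝ)
    {C : Fin p → Ω → ℝ} {D : Fin n → Ω → ℝ} {Z : Fin m → Ω → ℝ}
    (hC : ∀ i, MemLp (C i) 2 μ) (hD : ∀ i, MemLp (D i) 2 μ)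
    (hZ : ∀ i, MemLp (Z i) 2 μ) :
    cov μ Z (fun j ω => c j + (C j ω - ∑ l, N j l * D l ω))
      = cov μ Z C - cov μ Z D * Nᵀ := by
  rw [cov_comm, cov_adj_left c N hC hD hZ, transpose_sub, transpose_mul,
    ← cov_comm, ← cov_comm]

lemma memL2_adj {n p : ℕ} (c : Fin p → ℝ) (N : Matrix (Fin p) (Fin n) ℝ)
    {C : Fin p → Ω → ℝ} {D : Fin n → Ω → ℝ}
    (hC : ∀ i, MemLp (C i) 2 μ) (hD : ∀ i, MemLp (D i) 2 μ) (j : Fin p) :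
    MemLp (fun ω => c j + (C j ω - ∑ l, N j l * D l ω)) (2 : ENNReal) μ :=
  (memLp_const (c j)).add ((hC j).sub
    (memLp_finsetSum _ fun l _ => ((hD l).const_mul (N j l))))

lemma sub_adjExp_eq {m n : ℕ} (B : Fin m → Ω → ℝ) (D : Fin n → Ω → ℝ)
    (W : Matrix (Fin n) (Fin n) ℝ) :
    (fun i ω => B i ω - adjExp μ B D W i ω)
      = fun i ω => (-(∫ ω', B i ω' ∂μ) + ∑ k, (cov μ B D * W) i k * (∫ ω', D k ω' ∂μ))
          + (B i ω - ∑ k, (cov μ B D * W) i k * D k ω) := by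
  funext i ω
  simp only [adjExp, mul_sub, Finset.sum_sub_distrib]
  ring

lemma adjCov_eq {m p n : ℕ} {B : Fin m → Ω → ℝ} {C : Fin p → Ω → ℝ} {D : Fin n → Ω → ℝ}
    (W : Matrix (Fin n) (Fin n) ℝ)
    (hB : ∀ i, MemLp (B i) 2 μ) (hC : ∀ i, MemLp (C i) 2 μ)
    (hD : ∀ i, MemLp (D i) 2 μ) :
    adjCov μ B C D W = (cov μ B C - cov μ B D * (cov μ C D * W)ᵀ)
      - (cov μ B D * W) * (cov μ D C - cov μ D D * (cov μ C D * W)ᵀ) := by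
  rw [adjCov, sub_adjExp_eq B D W, sub_adjExp_eq C D W]
  rw [cov_adj_left _ (cov μ B D * W) hB hD
      (memL2_adj _ (cov μ C D * W) hC hD)]
  rw [cov_adj_right _ (cov μ C D * W) hC hD hB,
    cov_adj_right _ (cov μ C D * W) hC hD hD]

lemma mp_unique {n : ℕ} {V W1 W2 : Matrix (Fin n) (Fin n) ℝ}
    (h1 : IsMoorePenrose V W1) (h2 : IsMoorePenrose V W2) : W1 = W2 := by
  obtain ⟨a1, b1, c1, d1⟩ := h1
  obtain ⟨a2, b2, c2, d2⟩ := h2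
  have hVW : V * W1 = V * W2 := by
    calc V * W1 = (V * W1)ᵀ := c1.symm
    _ = W1ᵀ * Vᵀ := transpose_mul _ _
    _ = W1ᵀ * (V * W2 * V)ᵀ := by rw [a2]
    _ = W1ᵀ * (Vᵀ * (V * W2)ᵀ) := by rw [transpose_mul]
    _ = (W1ᵀ * Vᵀ) * (V * W2) := by rw [c2, Matrix.mul_assoc]
    _ = (V * W1)ᵀ * (V * W2) := by rw [transpose_mul]
    _ = (V * W1) * (V * W2) := by rw [c1]
    _ = (V * W1 * V) * W2 := by simp only [Matrix.mul_assoc]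
    _ = V * W2 := by rw [a1]
  have hWV : W1 * V = W2 * V := by
    calc W1 * V = (W1 * V)ᵀ := d1.symm
    _ = Vᵀ * W1ᵀ := transpose_mul _ _
    _ = (V * (W2 * V))ᵀ * W1ᵀ := by rw [← Matrix.mul_assoc, a2]
    _ = ((W2 * V)ᵀ * Vᵀ) * W1ᵀ := by rw [transpose_mul]
    _ = (W2 * V) * (Vᵀ * W1ᵀ) := by rw [d2, Matrix.mul_assoc]
    _ = (W2 * V) * (W1 * V)ᵀ := by rw [transpose_mul]
    _ = (W2 * V) * (W1 * V) := by rw [d1]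
    _ = W2 * (V * W1 * V) := by simp only [Matrix.mul_assoc]
    _ = W2 * V := by rw [a1]
  calc W1 = W1 * V * W1 := b1.symm
  _ = W2 * V * W1 := by rw [hWV]
  _ = W2 * (V * W1) := Matrix.mul_assoc _ _ _
  _ = W2 * (V * W2) := by rw [hVW]
  _ = W2 * V * W2 := (Matrix.mul_assoc _ _ _).symm
  _ = W2 := b2

lemma mp_transpose {n : ℕ} {V W : Matrix (Fin n) (Fin n) ℝ} (hV : Vᵀ = V)
    (h : IsMoorePenrose V W) : IsMoorePenrose V Wᵀ := by
  obtain ⟨a, b, c, d⟩ := h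
  have hVWt : V * Wᵀ = W * V := by
    calc V * Wᵀ = Vᵀᵀ * Wᵀ := by rw [transpose_transpose]
    _ = (W * Vᵀ)ᵀ := by rw [transpose_mul]
    _ = (W * V)ᵀ := by rw [hV]
    _ = W * V := d
  have hWtV : Wᵀ * V = V * W := by
    calc Wᵀ * V = Wᵀ * Vᵀᵀ := by rw [transpose_transpose]
    _ = (Vᵀ * W)ᵀ := by rw [transpose_mul]
    _ = (V * W)ᵀ := by rw [hV]
    _ = V * W := c
  refine ⟨?_, ?_, ?_, ?_⟩
  · rw [show V * Wᵀ * V = (V * W * V)ᵀ from by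
      simp only [transpose_mul, hV, Matrix.mul_assoc], a, hV]
  · rw [show Wᵀ * V * Wᵀ = (W * V * W)ᵀ from by
      simp only [transpose_mul, hV, Matrix.mul_assoc], b]
  · rw [hVWt, d]
  · rw [hWtV, c]

omit [IsProbabilityMeasure μ] in
lemma cov_self_symm {n : ℕ} (D : Fin n → Ω → ℝ) : (cov μ D D)ᵀ = cov μ D D := by
  ext i j; simp [cov, mul_comm]

lemma mp_symm {n : ℕ} {D : Fin n → Ω → ℝ} {W : Matrix (Fin n) (Fin n) ℝ}
    (h : IsMoorePenrose (cov μ D D) W) : Wᵀ = W :=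
  mp_unique (mp_transpose (cov_self_symm D) h) h

/-- The key identity: `Cov_D(B,C) = Cov(B,C) − Cov(B,D)·W·Cov(D,C)`. -/
lemma adjCov_eq' {m p n : ℕ} {B : Fin m → Ω → ℝ} {C : Fin p → Ω → ℝ} {D : Fin n → Ω → ℝ}
    {W : Matrix (Fin n) (Fin n) ℝ} (hW : IsMoorePenrose (cov μ D D) W)
    (hB : ∀ i, MemLp (B i) 2 μ) (hC : ∀ i, MemLp (C i) 2 μ)
    (hD : ∀ i, MemLp (D i) 2 μ) :
    adjCov μ B C D W = cov μ B C - cov μ B D * W * cov μ D C := by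
  have hWs : Wᵀ = W := mp_symm hW
  have hN : (cov μ C D * W)ᵀ = W * cov μ D C := by
    rw [transpose_mul, hWs, cov_comm C D, transpose_transpose]
  rw [adjCov_eq W hB hC hD, hN]
  have hWVW : W * cov μ D D * W = W := hW.2.1
  have e : W * (cov μ D D * (W * cov μ D C)) = W * cov μ D C := by
    rw [← Matrix.mul_assoc, ← Matrix.mul_assoc, hWVW]
  simp only [Matrix.mul_sub, Matrix.mul_assoc, e]
  abel

end Helpers

/-- if `B_0, …, B_n` (`n ≥ 1`) form a path in a Bayes linear tree, i.e.
`Cov_{B_k}(B_0, B_{k+1}) = 0` for `1 ≤ k ≤ n−1`, then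
`P_{B_0}(B_n) = P_{B_{n−1}}(B_n)·…·P_{B_1}(B_2)·P_{B_0}(B_1)`. -/
theorem proj_propagates_along_path [MeasurableSpace Ω] (μ : Measure Ω)
    [IsProbabilityMeasure μ] {d : ℕ → ℕ} (B : (k : ℕ) → Fin (d k) → Ω → ℝ)
    (hB : ∀ k i, Measurable (B k i) ∧ MemLp (B k i) 2 μ)
    (W : (k : ℕ) → Matrix (Fin (d k)) (Fin (d k)) ℝ)
    (hW : ∀ k, IsMoorePenrose (cov μ (B k) (B k)) (W k))
    (n : ℕ) (hn : 1 ≤ n)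
    (hpath : ∀ k, 1 ≤ k → k ≤ n - 1 → adjCov μ (B 0) (B (k + 1)) (B k) (W k) = 0) :
    cov μ (B n) (B 0) * W 0 = pathProj μ B W n := by
  obtain ⟨m, rfl⟩ : ∃ m, n = m + 1 := ⟨n - 1, (Nat.succ_pred_eq_of_pos hn).symm⟩
  clear hn
  induction m with
  | zero => simp [pathProj]
  | succ m ih =>
    have key := hpath (m + 1) (Nat.succ_le_succ (Nat.zero_le m)) (by omega)
    have hB0 : ∀ i, MemLp (B 0 i) 2 μ := fun i => (hB 0 i).2
    have hBm1 : ∀ i, MemLp (B (m + 1) i) 2 μ := fun i => (hB (m + 1) i).2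
    have hBm2 : ∀ i, MemLp (B (m + 1 + 1) i) 2 μ := fun i => (hB (m + 1 + 1) i).2
    rw [adjCov_eq' (hW (m + 1)) hB0 hBm2 hBm1, sub_eq_zero] at key
    have hWs : (W (m + 1))ᵀ = W (m + 1) := mp_symm (hW (m + 1))
    have key' : cov μ (B (m + 1 + 1)) (B 0)
        = cov μ (B (m + 1 + 1)) (B (m + 1)) * W (m + 1) * cov μ (B (m + 1)) (B 0) := by
      have := congrArg Matrix.transpose key
      rw [cov_comm (B 0) (B (m + 1 + 1)), transpose_transpose, transpose_mul,
        transpose_mul, hWs, cov_comm (B 0) (B (m + 1)), transpose_transpose,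
        cov_comm (B (m + 1)) (B (m + 1 + 1)), transpose_transpose] at this
      rw [this, Matrix.mul_assoc]
    have ih' := ih (fun k hk1 hk2 => hpath k hk1 (by omega))
    show cov μ (B (m + 1 + 1)) (B 0) * W 0 = pathProj μ B W (m + 1 + 1)
    rw [key', pathProj, ← ih']
    simp only [Matrix.mul_assoc]
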